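/- arXiv:2003.05960 — 3 statements merged into one kernel-verified Lean document; each statement's English description precedes it below -/
import Mathlib

section
/- Let R be a commutative ℚ-algebra, D : R → R a derivation, and f ∈ R with D³(f) = 0. Then for every natural number t, D^{2t}(f^t) = ((2t)! / 2^t) · (D²f)^t. -/
open Finset

private lemma derivation_iterate_leibniz {R : Type*} [CommRing R] [Algebra ℚ R]
    (D : Derivation ℚ R R) (n : ℕ) (a b : R) :
    (⇑D)^[n] (a * b) =
      ∑ k ∈ Finset.range (n + 1), (n.choose k) • ((⇑D)^[k] a * (⇑D)^[n - k] b) := by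
  induction n with
  | zero => simp
  | succ n ih =>
    set T : ℕ → R := fun k => (⇑D)^[k] a * (⇑D)^[n + 1 - k] b with hT
    have step : ∀ k ∈ Finset.range (n + 1),
        D ((n.choose k) • ((⇑D)^[k] a * (⇑D)^[n - k] b)) =
          (n.choose k) • T (k + 1) + (n.choose k) • T k := by
      intro k hk
      rw [Finset.mem_range] at hk
      have hnk : n - k + 1 = n + 1 - k := by omega
      have hnk2 : n + 1 - (k + 1) = n - k := by omega
      rw [map_nsmul, Derivation.leibniz, smul_add, hT]
      simp only [hnk2, ← Function.iterate_succ_apply' D, Nat.succ_eq_add_one, hnk,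
        smul_eq_mul]
      ring_nf
    rw [Function.iterate_succ_apply', ih, map_sum, Finset.sum_congr rfl step,
      Finset.sum_add_distrib]
    have hrhs : ∑ k ∈ Finset.range (n + 2), ((n + 1).choose k) • T k =
        (∑ k ∈ Finset.range (n + 1), (n.choose k) • T (k + 1))
        + ∑ k ∈ Finset.range (n + 1), (n.choose k) • T k := by
      rw [Finset.sum_range_succ' (fun k => ((n + 1).choose k) • T k) (n + 1)]
      have : ∀ k ∈ Finset.range (n + 1),
          ((n + 1).choose (k + 1)) • T (k + 1) =
            (n.choose k) • T (k + 1) + (n.choose (k + 1)) • T (k + 1) := by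
        intro k _
        rw [Nat.choose_succ_succ, add_nsmul]
      rw [Finset.sum_congr rfl this, Finset.sum_add_distrib, add_assoc]
      congr 1
      have h2 : ∑ k ∈ Finset.range (n + 1), (n.choose (k + 1)) • T (k + 1) + (n.choose 0) • T 0
          = ∑ k ∈ Finset.range (n + 2), (n.choose k) • T k :=
        (Finset.sum_range_succ' (fun k => (n.choose k) • T k) (n + 1)).symm
      simp only [Nat.choose_zero_right] at h2 ⊢
      rw [h2, Finset.sum_range_succ, Nat.choose_succ_self, zero_smul, add_zero]
    exact hrhs.symm

theorem iterated_derivation_power_two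
    {R : Type*} [CommRing R] [Algebra ℚ R]
    (D : Derivation ℚ R R) (f : R) (hf : D (D (D f)) = 0) :
    ∀ t : ℕ, (⇑D)^[2 * t] (f ^ t) =
      (((2 * t).factorial : ℚ) / (2 ^ t : ℚ)) • (D (D f)) ^ t := by
  have hfk : ∀ k, 3 ≤ k → (⇑D)^[k] f = 0 := by
    intro k hk
    obtain ⟨m, rfl⟩ : ∃ m, k = m + 3 := ⟨k - 3, by omega⟩
    have h3 : (⇑D)^[3] f = 0 := hf
    rw [Function.iterate_add_apply, h3]
    exact Function.iterate_fixed (map_zero D) m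
  have hDh : ∀ m : ℕ, D ((D (D f)) ^ m) = 0 := by
    intro m
    rw [Derivation.leibniz_pow, hf, smul_zero, smul_zero]
  intro t
  induction t with
  | zero => simp
  | succ t ih =>
    have h1 : (⇑D)^[2 * t + 1] (f ^ t) = 0 := by
      rw [Function.iterate_succ_apply', ih, Derivation.map_smul, hDh, smul_zero]
    have h2 : (⇑D)^[2 * t + 2] (f ^ t) = 0 := by
      rw [show 2 * t + 2 = (2 * t + 1) + 1 from rfl, Function.iterate_succ_apply', h1,
        map_zero]
    have hmul : 2 * (t + 1) = 2 * t + 2 := by ring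
    rw [hmul, pow_succ' f t, derivation_iterate_leibniz]
    rw [Finset.sum_eq_single_of_mem 2 (Finset.mem_range.mpr (by omega))]
    · have hD2 : (⇑D)^[2] f = D (D f) := rfl
      have hsub : 2 * t + 2 - 2 = 2 * t := by omega
      rw [hD2, hsub, ih]
      have hC : (2 * t + 2).choose 2 = (t + 1) * (2 * t + 1) := by
        rw [Nat.choose_two_right, show 2 * t + 2 - 1 = 2 * t + 1 by omega,
          show (2 * t + 2) * (2 * t + 1) = (t + 1) * (2 * t + 1) * 2 by ring,
          Nat.mul_div_cancel _ (by norm_num)]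
      rw [hC, ← Nat.cast_smul_eq_nsmul ℚ, mul_smul_comm, smul_smul, ← pow_succ']
      congr 1
      have hfac : ((2 * t + 2).factorial : ℚ)
          = (2 * t + 2) * ((2 * t + 1) * ((2 * t).factorial : ℚ)) := by
        rw [show 2 * t + 2 = (2 * t + 1) + 1 from rfl, Nat.factorial_succ,
          Nat.factorial_succ]
        push_cast; ring
      rw [hfac]
      have h2t : (2 : ℚ) ^ t ≠ 0 := by positivity
      field_simp
      push_cast; ring
    · intro k hk hk2
      rcases Nat.lt_or_ge k 3 with h | h
      · interval_cases k
        · simp [h2]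
        · rw [show 2 * t + 2 - 1 = 2 * t + 1 by omega, h1, mul_zero, smul_zero]
        · omega
      · rw [hfk k h, zero_mul, smul_zero]
end

section
/- Let R be a commutative ℚ-algebra with derivation D, and let x, y, z, u, s ∈ R satisfy D(x) = −y, D(y) = −2z, D(z) = 0, D(s) = u, D(u) = 0. Then for all natural numbers t, q, r, m, setting n = 2t + q + r, one has D^n(x^t · y^q · u^m · s^r) = (−2)^q · n! · z^{t+q} · u^{m+r}. -/
section aux

variable {R : Type*} [CommRing R] [Algebra ℚ R] (D : Derivation ℚ R R)

lemma iterD_add (k : ℕ) (a b : R) :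
    (⇑D)^[k] (a + b) = (⇑D)^[k] a + (⇑D)^[k] b := by
  induction k generalizing a b with
  | zero => simp
  | succ k ih => simp [Function.iterate_succ_apply, map_add, ih]

lemma iterD_nsmul (k c : ℕ) (a : R) :
    (⇑D)^[k] (c • a) = c • (⇑D)^[k] a := by
  induction k generalizing a with
  | zero => simp
  | succ k ih => simp only [Function.iterate_succ_apply, map_nsmul, ih]

lemma iterD_neg (k : ℕ) (a : R) :
    (⇑D)^[k] (-a) = -(⇑D)^[k] a := by
  induction k generalizing a with
  | zero => simp
  | succ k ih => simp [Function.iterate_succ_apply, map_neg, ih]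

lemma iterD_const_mul (k : ℕ) (c a : R) (hc : D c = 0) :
    (⇑D)^[k] (c * a) = c * (⇑D)^[k] a := by
  induction k generalizing a with
  | zero => simp
  | succ k ih => simp [Function.iterate_succ_apply, Derivation.leibniz, hc, ih]

end aux

theorem weight_vector_computation
    {R : Type*} [CommRing R] [Algebra ℚ R]
    (D : Derivation ℚ R R) (x y z u s : R)
    (hx : D x = -y) (hy : D y = -(2 : R) * z) (hz : D z = 0)
    (hs : D s = u) (hu : D u = 0) :
    ∀ t q r m : ℕ,
      (⇑D)^[2 * t + q + r] (x ^ t * y ^ q * u ^ m * s ^ r) =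
        (-2 : R) ^ q * ((2 * t + q + r).factorial : R) * z ^ (t + q) * u ^ (m + r) := by
  suffices h : ∀ n t q r m : ℕ, 2 * t + q + r = n →
      (⇑D)^[n] (x ^ t * y ^ q * u ^ m * s ^ r) =
        (-2 : R) ^ q * (n.factorial : R) * z ^ (t + q) * u ^ (m + r) by
    intro t q r m
    exact h _ t q r m rfl
  intro n
  induction n with
  | zero =>
    intro t q r m hn
    obtain ⟨ht, hq, hr⟩ : t = 0 ∧ q = 0 ∧ r = 0 := by omega
    subst ht; subst hq; subst hr
    simp
  | succ k ih =>
    intro t q r m hn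
    have expand : D (x ^ t * y ^ q * u ^ m * s ^ r) =
        t • (-(x ^ (t - 1) * y ^ (q + 1) * u ^ m * s ^ r)) +
        (2 * q) • (-(z * (x ^ t * y ^ (q - 1) * u ^ m * s ^ r))) +
        r • (x ^ t * y ^ q * u ^ (m + 1) * s ^ (r - 1)) := by
      simp only [Derivation.leibniz, Derivation.leibniz_pow, hx, hy, hz, hs, hu,
        smul_eq_mul, nsmul_eq_mul]
      push_cast
      ring
    rw [Function.iterate_succ_apply, expand, iterD_add, iterD_add, iterD_nsmul,
      iterD_nsmul, iterD_nsmul, iterD_neg, iterD_neg, iterD_const_mul D k z _ hz]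
    have hterm1 : t • (-(⇑D)^[k] (x ^ (t - 1) * y ^ (q + 1) * u ^ m * s ^ r)) =
        (2 * t : ℕ) • ((-2 : R) ^ q * (k.factorial : R) * z ^ (t + q) * u ^ (m + r)) := by
      cases t with
      | zero => simp
      | succ t' =>
        rw [Nat.add_sub_cancel, ih t' (q + 1) r m (by omega),
          show t' + 1 + q = t' + (q + 1) by ring]
        simp only [nsmul_eq_mul]
        push_cast
        ring
    have hterm2 : (2 * q) • (-(z * (⇑D)^[k] (x ^ t * y ^ (q - 1) * u ^ m * s ^ r))) =
        q • ((-2 : R) ^ q * (k.factorial : R) * z ^ (t + q) * u ^ (m + r)) := by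
      cases q with
      | zero => simp
      | succ q' =>
        rw [Nat.add_sub_cancel, ih t q' r m (by omega),
          show t + (q' + 1) = t + q' + 1 by ring, pow_succ, pow_succ]
        simp only [nsmul_eq_mul]
        push_cast
        ring
    have hterm3 : r • (⇑D)^[k] (x ^ t * y ^ q * u ^ (m + 1) * s ^ (r - 1)) =
        r • ((-2 : R) ^ q * (k.factorial : R) * z ^ (t + q) * u ^ (m + r)) := by
      cases r with
      | zero => simp
      | succ r' =>
        rw [Nat.add_sub_cancel, ih t q r' (m + 1) (by omega),
          show m + 1 + r' = m + (r' + 1) by ring]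
    rw [hterm1, hterm2, hterm3]
    simp only [nsmul_eq_mul]
    have hcoef : ((2 * t : ℕ) : R) + (q : R) + (r : R) = ((k + 1 : ℕ) : R) := by
      exact_mod_cast congrArg (Nat.cast : ℕ → R) hn
    rw [Nat.factorial_succ]
    push_cast at hcoef ⊢
    linear_combination ((-2 : R) ^ q * (k.factorial : R) * z ^ (t + q) * u ^ (m + r)) * hcoef
end

section
/- Let K be a field, V a finite-dimensional K-vector space, φ : V → V a linear endomorphism, p ∈ K, and F ⊆ V a subspace. Assume that 1 − φ and 1 − pφ are both invertible on V. Consider the three-term complex C⁰ = V → C¹ = V ⊕ V ⊕ (V/F) → C² = V with differentials d⁰(x) = ((1−φ)x, 0, x mod F) and d¹(u, v, w) = −(1−pφ)v. Then: (a) d⁰ is injective (H⁰ = 0); (b) d¹ is surjective (H² = 0); (c) the map V/F → ker(d¹)/im(d⁰) sending w to the class of (0, 0, w) is an isomorphism. -/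
theorem semistable_complex_cohomology
    {K V : Type*} [Field K] [AddCommGroup V] [Module K V] [FiniteDimensional K V]
    (φ : V →ₗ[K] V) (p : K) (F : Submodule K V)
    (h1 : Function.Bijective ((LinearMap.id : V →ₗ[K] V) - φ))
    (h2 : Function.Bijective ((LinearMap.id : V →ₗ[K] V) - p • φ)) :
    let d0 : V →ₗ[K] V × V × (V ⧸ F) :=
      ((LinearMap.id : V →ₗ[K] V) - φ).prod ((0 : V →ₗ[K] V).prod F.mkQ)
    let d1 : (V × V × (V ⧸ F)) →ₗ[K] V :=
      (-((LinearMap.id : V →ₗ[K] V) - p • φ)) ∘ₗ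
        (LinearMap.fst K V (V ⧸ F)) ∘ₗ (LinearMap.snd K V (V × (V ⧸ F)))
    Function.Injective d0 ∧
    Function.Surjective d1 ∧
    (∀ x : V × V × (V ⧸ F), d1 x = 0 →
        ∃ w : V ⧸ F, x - (0, 0, w) ∈ LinearMap.range d0) ∧
    (∀ w : V ⧸ F, ((0, 0, w) : V × V × (V ⧸ F)) ∈ LinearMap.range d0 → w = 0) := by
  intro d0 d1
  refine ⟨?_, ?_, ?_, ?_⟩
  · intro a b hab
    exact h1.1 (congrArg Prod.fst hab)
  · intro y
    obtain ⟨v, hv⟩ := h2.2 (-y)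
    exact ⟨(0, v, 0), by simp [d1, hv]⟩
  · rintro ⟨u, v, w⟩ hx
    have hv : v = 0 := by
      apply h2.1
      have : -(((LinearMap.id : V →ₗ[K] V) - p • φ) v) = 0 := hx
      simpa using neg_eq_zero.mp this
    obtain ⟨a, ha⟩ := h1.2 u
    refine ⟨w - F.mkQ a, a, ?_⟩
    simp [d0, ha, hv, Prod.ext_iff]
  · rintro w ⟨a, ha⟩
    have h0 : ((LinearMap.id : V →ₗ[K] V) - φ) a = 0 := congrArg Prod.fst ha
    have : a = 0 := by
      apply h1.1; simpa using h0
    have := congrArg (Prod.snd ∘ Prod.snd) ha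
    simp [d0, ‹a = 0›] at this
    exact this.symm
end
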